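/- Fix ε > 0, q ∈ ℝ_{≥0}^D, finite non-negative Borel measures ν, ξ on [0,1], and p ∈ ℝ_{≥0}^D with q − p ∈ ℝ_{≥0}^D. Let X_n^{ε,q,ν} = log Σ_{π: 0→⌊nq⌋} exp(−(1/ε)ρ(μ_π, nν)). Then X_n^{ε,p,ξ} − (1/ε)(n‖q−p‖₁ + n‖ν−ξ‖_TV + D) ≤ X_n^{ε,p,ξ} − (1/ε)(‖⌊nq⌋−⌊np⌋‖₁ + n·ρ(ν,ξ)) ≤ X_n^{ε,q,ν}. -/

import Mathlib

open MeasureTheory Finset Filter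
open scoped Classical ENNReal unitInterval

noncomputable section

/-- A north-east path in `ℤ^D` is encoded by its starting point and its step sequence:
a path of length `L` is `w : Fin L → Fin D`, where step `j` adds the standard basis
vector `e_{w j}`. `pathsFS L p q` is the finset of step sequences of NE paths `p → q`
(empty unless `q - p` has non-negative coordinates summing to `L`). -/
def pathsFS (L : ℕ) {D : ℕ} (p q : Fin D → ℤ) : Finset (Fin L → Fin D) :=
  Finset.univ.filter fun w =>
    ∀ i, p i + ((Finset.univ.filter fun j => w j = i).card : ℤ) = q i

/-- The vertex reached from `p` after the first `j` steps of the step sequence `w`. -/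
def vertexAt {D : ℕ} (p : Fin D → ℤ) {L : ℕ} (w : Fin L → Fin D) (j : ℕ) (i : Fin D) : ℤ :=
  p i + ((Finset.univ.filter fun l : Fin L => (l : ℕ) < j ∧ w l = i).card : ℤ)

/-- The (unnormalized) empirical measure `μ_π = Σ_{e ∈ π} δ_{U_e}` of the edge labels along
the NE path from `p` with step sequence `w`; the label of edge `j` (anchored at the vertex
after `j` steps, in direction `w j`) is given by the labelling `ω`. -/
def pathMeasure {D : ℕ} (ω : ((Fin D → ℤ) × Fin D) → I)
    (p : Fin D → ℤ) {L : ℕ} (w : Fin L → Fin D) : Measure I :=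
  ∑ j : Fin L, Measure.dirac (ω (vertexAt p w j, w j))

/-- Coordinatewise floor `⌊nq⌋` of the scaled direction `nq`. -/
def fl {D : ℕ} (n : ℕ) (q : Fin D → ℝ) (i : Fin D) : ℤ := ⌊(n : ℝ) * q i⌋

end

noncomputable section

/-- `X_n^{ε,q,ν} = log Σ_{π : 0 → ⌊nq⌋} exp(−(1/ε)·ρ(μ_π, nν))`. -/
def Xn {D : ℕ} (ω : ((Fin D → ℤ) × Fin D) → I) (ε : ℝ) (n : ℕ)
    (q : Fin D → ℝ) (ν : Measure I) : ℝ :=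
  Real.log (∑ w ∈ pathsFS (∑ i, (fl n q i).toNat) (0 : Fin D → ℤ) (fl n q),
    Real.exp (-(1/ε) * levyProkhorovDist (pathMeasure ω 0 w) (n • ν)))

/-- The total variation norm `‖ν − ξ‖_TV = sup_{A Borel} |ν(A) − ξ(A)|`. -/
def tvDist {X : Type*} [MeasurableSpace X] (μ ν : Measure X) : ℝ :=
  ⨆ A : {s : Set X // MeasurableSet s}, |(μ A.1).toReal - (ν A.1).toReal|

/-! ### Auxiliary combinatorial lemmas -/

section CombAux

variable {D : ℕ}

lemma mem_pathsFS {L : ℕ} {p q : Fin D → ℤ} {w : Fin L → Fin D} :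
    w ∈ pathsFS L p q ↔
      ∀ i, p i + ((Finset.univ.filter fun j => w j = i).card : ℤ) = q i := by
  simp [pathsFS]

/-- Concatenation of step sequences. -/
def concatPath {L L' : ℕ} (w : Fin L → Fin D) (w' : Fin L' → Fin D) :
    Fin (L + L') → Fin D :=
  fun j => Sum.elim w w' (finSumFinEquiv.symm j)

lemma concatPath_castAdd {L L' : ℕ} (w : Fin L → Fin D) (w' : Fin L' → Fin D) (a : Fin L) :
    concatPath w w' (Fin.castAdd L' a) = w a := by
  rw [← finSumFinEquiv_apply_left]; simp [concatPath]

lemma concatPath_natAdd {L L' : ℕ} (w : Fin L → Fin D) (w' : Fin L' → Fin D) (b : Fin L') :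
    concatPath w w' (Fin.natAdd L b) = w' b := by
  rw [← finSumFinEquiv_apply_right]; simp [concatPath]

lemma card_filter_split {L L' : ℕ} {P : Fin (L + L') → Prop} [DecidablePred P] :
    (Finset.univ.filter P).card
      = (Finset.univ.filter fun a : Fin L => P (Fin.castAdd L' a)).card
        + (Finset.univ.filter fun b : Fin L' => P (Fin.natAdd L b)).card := by
  simp only [Finset.card_filter]
  rw [← Equiv.sum_comp finSumFinEquiv (fun j => if P j then 1 else 0),
    Fintype.sum_sum_type]
  simp [finSumFinEquiv_apply_left, finSumFinEquiv_apply_right]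
  simp only [Finset.card_filter]
  convert rfl <;> split_ifs <;> simp [*]

lemma vertexAt_concat_left {L L' : ℕ} (p : Fin D → ℤ) (w : Fin L → Fin D)
    (w' : Fin L' → Fin D) (m : ℕ) (hm : m ≤ L) :
    vertexAt p (concatPath w w') m = vertexAt p w m := by
  funext i
  unfold vertexAt
  congr 2
  rw [card_filter_split]
  simp only [concatPath_castAdd, concatPath_natAdd, Fin.coe_castAdd, Fin.coe_natAdd]
  rw [Finset.filter_false_of_mem (fun b _ h => by omega : ∀ b ∈ (Finset.univ : Finset (Fin L')),
    ¬(L + (b : ℕ) < m ∧ w' b = i))]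
  simp

lemma vertexAt_filter_all {L : ℕ} (p : Fin D → ℤ) (w : Fin L → Fin D) (i : Fin D) :
    vertexAt p w L i = p i + ((Finset.univ.filter fun j => w j = i).card : ℤ) := by
  unfold vertexAt
  congr 3
  apply Finset.filter_congr
  intro l _
  simp [l.isLt]

lemma vertexAt_concat_right {L L' : ℕ} (p : Fin D → ℤ) (w : Fin L → Fin D)
    (w' : Fin L' → Fin D) (b : ℕ) :
    vertexAt p (concatPath w w') (L + b) = vertexAt (vertexAt p w L) w' b := by
  funext i
  have hL := vertexAt_filter_all p w i
  unfold vertexAt at hL ⊢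
  rw [card_filter_split]
  simp only [concatPath_castAdd, concatPath_natAdd, Fin.coe_castAdd, Fin.coe_natAdd,
    add_lt_add_iff_left]
  have h1iff : ∀ a : Fin L, ((a : ℕ) < L + b) = True := fun a => eq_true (by omega)
  simp only [h1iff, true_and]
  push_cast
  linarith [hL]

lemma concatPath_mem {L L' : ℕ} {p q r : Fin D → ℤ} {w : Fin L → Fin D}
    {w' : Fin L' → Fin D} (hw : w ∈ pathsFS L p q) (hw' : w' ∈ pathsFS L' q r) :
    concatPath w w' ∈ pathsFS (L + L') p r := by
  rw [mem_pathsFS] at *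
  intro i
  rw [card_filter_split]
  simp only [concatPath_castAdd, concatPath_natAdd]
  have h1 := hw i
  have h2 := hw' i
  push_cast
  push_cast at h1 h2
  linarith

lemma pathMeasure_concat {L L' : ℕ} {p q : Fin D → ℤ} (ω : ((Fin D → ℤ) × Fin D) → I)
    {w : Fin L → Fin D} (w' : Fin L' → Fin D) (hw : w ∈ pathsFS L p q) :
    pathMeasure ω p (concatPath w w') = pathMeasure ω p w + pathMeasure ω q w' := by
  have hlast : vertexAt p w L = q := by
    funext i
    rw [vertexAt_filter_all, mem_pathsFS.mp hw i]
  unfold pathMeasure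
  rw [← Equiv.sum_comp (finSumFinEquiv : Fin L ⊕ Fin L' ≃ Fin (L + L'))
    (fun j => Measure.dirac (ω (vertexAt p (concatPath w w') j, concatPath w w' j))),
    Fintype.sum_sum_type]
  congr 1
  · apply Finset.sum_congr rfl
    intro a _
    simp only [finSumFinEquiv_apply_left, concatPath_castAdd, Fin.coe_castAdd]
    rw [vertexAt_concat_left p w w' a (le_of_lt a.isLt)]
  · apply Finset.sum_congr rfl
    intro b _
    simp only [finSumFinEquiv_apply_right, concatPath_natAdd, Fin.coe_natAdd]
    rw [vertexAt_concat_right p w w' b, hlast]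

lemma pathMeasure_apply_univ {L : ℕ} (ω : ((Fin D → ℤ) × Fin D) → I)
    (p : Fin D → ℤ) (w : Fin L → Fin D) :
    pathMeasure ω p w Set.univ = L := by
  unfold pathMeasure
  rw [Measure.finset_sum_apply]
  simp

instance pathMeasure_finite {L : ℕ} (ω : ((Fin D → ℤ) × Fin D) → I)
    (p : Fin D → ℤ) (w : Fin L → Fin D) : IsFiniteMeasure (pathMeasure ω p w) :=
  ⟨by rw [pathMeasure_apply_univ]; exact ENNReal.natCast_lt_top L⟩

lemma pathsFS_exists : ∀ (N : ℕ) (c : Fin D → ℕ) (p : Fin D → ℤ), (∑ i, c i) = N →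
    ∃ w, w ∈ pathsFS N p (fun i => p i + (c i : ℤ)) := by
  intro N
  induction N with
  | zero =>
    intro c p hc
    refine ⟨fun j => j.elim0, ?_⟩
    rw [mem_pathsFS]
    intro i
    have hci : c i = 0 := Finset.sum_eq_zero_iff.mp hc i (Finset.mem_univ i)
    simp [hci]
  | succ N ih =>
    intro c p hc
    have hex : ∃ i0, c i0 ≠ 0 := by
      by_contra h
      push_neg at h
      simp only [h, Finset.sum_const_zero] at hc
      exact (Nat.succ_ne_zero N) hc.symm
    obtain ⟨i0, hi0⟩ := hex
    set c' := Function.update c i0 (c i0 - 1) with hc'def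
    have hsum : ∑ i, c' i = N := by
      rw [Finset.sum_update_of_mem (Finset.mem_univ i0)]
      rw [← Finset.add_sum_erase _ c (Finset.mem_univ i0), Finset.erase_eq] at hc
      omega
    obtain ⟨w, hw⟩ := ih c' p hsum
    have hstep : (fun _ : Fin 1 => i0) ∈
        pathsFS 1 (fun i => p i + (c' i : ℤ)) (fun i => p i + (c i : ℤ)) := by
      rw [mem_pathsFS]
      intro i
      by_cases h : i = i0
      · subst h
        have hcard : ((Finset.univ.filter fun _ : Fin 1 => i = i).card : ℤ) = 1 := by
          simp
        rw [hcard, hc'def]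
        simp only [Function.update_self]
        have : ((c i - 1 : ℕ) : ℤ) = (c i : ℤ) - 1 := by omega
        rw [this]; ring
      · have hcard : ((Finset.univ.filter fun _ : Fin 1 => i0 = i).card : ℤ) = 0 := by
          simp [Ne.symm h]
        rw [hcard, hc'def]
        simp only [Function.update_of_ne h]
        ring
    exact ⟨concatPath w (fun _ => i0), concatPath_mem hw hstep⟩

end CombAux

/-! ### Auxiliary metric lemmas -/

section MetricAux

open Set Metric

variable {Ω : Type*} [MeasurableSpace Ω] [PseudoEMetricSpace Ω]

lemma levyProkhorovEDist_add_right_le (μ ν : Measure Ω) :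
    levyProkhorovEDist (μ + ν) μ ≤ ν Set.univ := by
  apply levyProkhorovEDist_le_of_forall
  intro ε B hε hεtop hB
  have hε0 : 0 < ε.toReal := ENNReal.toReal_pos (zero_le.trans_lt hε).ne' hεtop.ne
  have hthick : B ⊆ thickening ε.toReal B := self_subset_thickening hε0 B
  constructor
  · rw [Measure.add_apply]
    exact add_le_add (measure_mono hthick) (le_of_lt ((measure_mono (subset_univ B)).trans_lt hε))
  · refine le_add_right ((measure_mono hthick).trans ?_)
    rw [Measure.add_apply]
    exact le_add_right le_rfl

lemma levyProkhorovEDist_nsmul_le (n : ℕ) (μ ν : Measure Ω) :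
    levyProkhorovEDist (n • μ) (n • ν) ≤ n * levyProkhorovEDist μ ν := by
  rcases Nat.eq_zero_or_pos n with rfl | hn
  · simp [levyProkhorovEDist_self]
  set d := levyProkhorovEDist μ ν with hd
  apply levyProkhorovEDist_le_of_forall
  intro ε B hε hεtop hB
  have hn0 : (n : ℝ≥0∞) ≠ 0 := by exact_mod_cast hn.ne'
  have hntop : (n : ℝ≥0∞) ≠ ∞ := ENNReal.natCast_ne_top n
  have hdlt : d < ε / n := by
    rw [ENNReal.lt_div_iff_mul_lt (Or.inl hn0) (Or.inl hntop)]
    calc d * n = (n : ℝ≥0∞) * d := mul_comm _ _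
    _ < ε := hε
  have hle : (ε / n).toReal ≤ ε.toReal :=
    ENNReal.toReal_mono hεtop.ne (ENNReal.div_le_of_le_mul
      (le_mul_of_one_le_right zero_le (by exact_mod_cast hn : (1:ℝ≥0∞) ≤ n)))
  have key : ∀ α β : Measure Ω,
      α B ≤ β (thickening (ε / n).toReal B) + ε / n →
      (n • α) B ≤ (n • β) (thickening ε.toReal B) + ε := by
    intro α β h
    rw [Measure.smul_apply, Measure.smul_apply, nsmul_eq_mul, nsmul_eq_mul]
    calc (n : ℝ≥0∞) * α B
        ≤ (n : ℝ≥0∞) * (β (thickening (ε / n).toReal B) + ε / n) := mul_le_mul_right h _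
      _ = (n : ℝ≥0∞) * β (thickening (ε / n).toReal B) + (n : ℝ≥0∞) * (ε / n) :=
          mul_add _ _ _
      _ ≤ (n : ℝ≥0∞) * β (thickening ε.toReal B) + ε :=
          add_le_add (mul_le_mul_right (measure_mono (thickening_mono hle B)) _)
            (le_of_eq (ENNReal.mul_div_cancel hn0 hntop))
  exact ⟨key μ ν (left_measure_le_of_levyProkhorovEDist_lt hdlt hB),
    key ν μ (right_measure_le_of_levyProkhorovEDist_lt hdlt hB)⟩

lemma tvDist_nonneg (μ ν : Measure Ω) : 0 ≤ tvDist μ ν :=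
  Real.iSup_nonneg fun _ => abs_nonneg _

lemma levyProkhorovEDist_le_ofReal_tvDist (μ ν : Measure Ω)
    [IsFiniteMeasure μ] [IsFiniteMeasure ν] :
    levyProkhorovEDist μ ν ≤ ENNReal.ofReal (tvDist μ ν) := by
  have htv0 : 0 ≤ tvDist μ ν := tvDist_nonneg μ ν
  have hbdd : BddAbove (Set.range fun A : {s : Set Ω // MeasurableSet s} =>
      |(μ A.1).toReal - (ν A.1).toReal|) := by
    refine ⟨(μ univ).toReal + (ν univ).toReal, ?_⟩
    rintro x ⟨A, rfl⟩
    have h1 : (μ A.1).toReal ≤ (μ univ).toReal :=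
      ENNReal.toReal_mono (measure_ne_top μ _) (measure_mono (subset_univ _))
    have h2 : (ν A.1).toReal ≤ (ν univ).toReal :=
      ENNReal.toReal_mono (measure_ne_top ν _) (measure_mono (subset_univ _))
    have h3 : (0:ℝ) ≤ (μ A.1).toReal := ENNReal.toReal_nonneg
    have h4 : (0:ℝ) ≤ (ν A.1).toReal := ENNReal.toReal_nonneg
    rw [abs_le]; constructor <;> linarith
  have key : ∀ (α β : Measure Ω) (_ : IsFiniteMeasure α) (_ : IsFiniteMeasure β)
      (B : Set Ω),
      (α B).toReal - (β B).toReal ≤ tvDist μ ν →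
      α B ≤ β B + ENNReal.ofReal (tvDist μ ν) := by
    intro α β hα hβ B h
    calc α B = ENNReal.ofReal ((α B).toReal) :=
          (ENNReal.ofReal_toReal (measure_ne_top α B)).symm
      _ ≤ ENNReal.ofReal ((β B).toReal + tvDist μ ν) := ENNReal.ofReal_le_ofReal (by linarith)
      _ = ENNReal.ofReal ((β B).toReal) + ENNReal.ofReal (tvDist μ ν) :=
          ENNReal.ofReal_add ENNReal.toReal_nonneg htv0
      _ = β B + ENNReal.ofReal (tvDist μ ν) := by
          rw [ENNReal.ofReal_toReal (measure_ne_top β B)]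
  apply levyProkhorovEDist_le_of_forall
  intro ε B hε hεtop hB
  have hεpos : 0 < ε.toReal := ENNReal.toReal_pos (zero_le.trans_lt hε).ne' hεtop.ne
  have habs : |(μ B).toReal - (ν B).toReal| ≤ tvDist μ ν := le_ciSup hbdd ⟨B, hB⟩
  rw [abs_le] at habs
  have hthick : B ⊆ thickening ε.toReal B := self_subset_thickening hεpos B
  constructor
  · exact (key μ ν ‹_› ‹_› B habs.2).trans (add_le_add (measure_mono hthick) hε.le)
  · exact (key ν μ ‹_› ‹_› B (by linarith [habs.1])).trans
      (add_le_add (measure_mono hthick) hε.le)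

lemma levyProkhorovDist_le_tvDist (μ ν : Measure Ω)
    [IsFiniteMeasure μ] [IsFiniteMeasure ν] :
    levyProkhorovDist μ ν ≤ tvDist μ ν :=
  ENNReal.toReal_le_of_le_ofReal (tvDist_nonneg μ ν)
    (levyProkhorovEDist_le_ofReal_tvDist μ ν)

lemma levyProkhorovDist_nsmul_le (n : ℕ) (μ ν : Measure Ω)
    [IsFiniteMeasure μ] [IsFiniteMeasure ν] :
    levyProkhorovDist (n • μ) (n • ν) ≤ n * levyProkhorovDist μ ν := by
  have h := levyProkhorovEDist_nsmul_le n μ ν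
  have hfin : (n : ℝ≥0∞) * levyProkhorovEDist μ ν ≠ ∞ :=
    ENNReal.mul_ne_top (ENNReal.natCast_ne_top n) (levyProkhorovEDist_ne_top μ ν)
  have h2 := ENNReal.toReal_mono hfin h
  rwa [ENNReal.toReal_mul, ENNReal.toReal_natCast n] at h2

lemma levyProkhorovDist_add_right_le (μ ν : Measure Ω) [IsFiniteMeasure ν] :
    levyProkhorovDist (μ + ν) μ ≤ (ν Set.univ).toReal :=
  ENNReal.toReal_mono (measure_ne_top ν _) (levyProkhorovEDist_add_right_le μ ν)

instance nsmul_isFiniteMeasure (n : ℕ) (μ : Measure Ω) [IsFiniteMeasure μ] :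
    IsFiniteMeasure (n • μ) := by
  constructor
  rw [Measure.smul_apply, nsmul_eq_mul]
  exact ENNReal.mul_lt_top (ENNReal.natCast_lt_top n) (measure_lt_top μ _)

end MetricAux

/-! ### The main comparison lemma -/

lemma log_sum_le_log_sum {D : ℕ} (ε : ℝ) (hε : 0 < ε) (ν ξ : Measure I)
    [IsFiniteMeasure ν] [IsFiniteMeasure ξ] (ω : ((Fin D → ℤ) × Fin D) → I) (n : ℕ)
    (L L' : ℕ) (P Q : Fin D → ℤ) (w0 : Fin L → Fin D) (hw0 : w0 ∈ pathsFS L 0 P)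
    (w' : Fin L' → Fin D) (hw' : w' ∈ pathsFS L' P Q) :
    Real.log (∑ w ∈ pathsFS L 0 P,
        Real.exp (-(1/ε) * levyProkhorovDist (pathMeasure ω 0 w) (n • ξ)))
      - (1/ε) * ((L' : ℝ) + n * levyProkhorovDist ν ξ)
    ≤ Real.log (∑ v ∈ pathsFS (L + L') 0 Q,
        Real.exp (-(1/ε) * levyProkhorovDist (pathMeasure ω 0 v) (n • ν))) := by
  set C : ℝ := (L' : ℝ) + n * levyProkhorovDist ν ξ with hC
  -- per-path estimate
  have key : ∀ w ∈ pathsFS L 0 P,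
      levyProkhorovDist (pathMeasure ω 0 (concatPath w w')) (n • ν)
        ≤ levyProkhorovDist (pathMeasure ω 0 w) (n • ξ) + C := by
    intro w hw
    rw [pathMeasure_concat ω w' hw]
    have t1 := levyProkhorovDist_triangle (pathMeasure ω 0 w + pathMeasure ω P w')
      (pathMeasure ω 0 w) (n • ν)
    have t2 := levyProkhorovDist_triangle (pathMeasure ω 0 w) (n • ξ) (n • ν)
    have h1 : levyProkhorovDist (pathMeasure ω 0 w + pathMeasure ω P w')
        (pathMeasure ω 0 w) ≤ (L' : ℝ) := by
      have h := levyProkhorovDist_add_right_le (pathMeasure ω 0 w) (pathMeasure ω P w')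
      rwa [pathMeasure_apply_univ, ENNReal.toReal_natCast] at h
    have h2 : levyProkhorovDist (n • ξ) (n • ν) ≤ (n : ℝ) * levyProkhorovDist ν ξ := by
      have h := levyProkhorovDist_nsmul_le n ξ ν
      rwa [levyProkhorovDist_comm ξ ν] at h
    rw [hC]
    linarith
  -- sum estimate
  have hinj : ∀ x ∈ pathsFS L 0 P, ∀ y ∈ pathsFS L 0 P,
      concatPath x w' = concatPath y w' → x = y := by
    intro x _ y _ h
    funext a
    have := congrFun h (Fin.castAdd L' a)
    rwa [concatPath_castAdd, concatPath_castAdd] at this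
  have hsum : (∑ w ∈ pathsFS L 0 P,
        Real.exp (-(1/ε) * levyProkhorovDist (pathMeasure ω 0 w) (n • ξ)))
        * Real.exp (-(1/ε) * C)
      ≤ ∑ v ∈ pathsFS (L + L') 0 Q,
        Real.exp (-(1/ε) * levyProkhorovDist (pathMeasure ω 0 v) (n • ν)) := by
    rw [Finset.sum_mul]
    calc ∑ w ∈ pathsFS L 0 P,
          Real.exp (-(1/ε) * levyProkhorovDist (pathMeasure ω 0 w) (n • ξ))
            * Real.exp (-(1/ε) * C)
        ≤ ∑ w ∈ pathsFS L 0 P,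
          Real.exp (-(1/ε) * levyProkhorovDist (pathMeasure ω 0 (concatPath w w')) (n • ν)) := by
          apply Finset.sum_le_sum
          intro w hw
          rw [← Real.exp_add]
          apply Real.exp_le_exp.mpr
          have hk := key w hw
          have h1ε : (0:ℝ) ≤ 1/ε := by positivity
          nlinarith [mul_le_mul_of_nonneg_left hk h1ε]
      _ = ∑ v ∈ (pathsFS L 0 P).image (fun w => concatPath w w'),
          Real.exp (-(1/ε) * levyProkhorovDist (pathMeasure ω 0 v) (n • ν)) :=
          (Finset.sum_image (f := fun v => Real.exp
            (-(1/ε) * levyProkhorovDist (pathMeasure ω 0 v) (n • ν))) hinj).symm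
      _ ≤ ∑ v ∈ pathsFS (L + L') 0 Q,
          Real.exp (-(1/ε) * levyProkhorovDist (pathMeasure ω 0 v) (n • ν)) := by
          apply Finset.sum_le_sum_of_subset_of_nonneg
          · rw [Finset.image_subset_iff]
            exact fun w hw => concatPath_mem hw hw'
          · exact fun _ _ _ => (Real.exp_pos _).le
  have hSp_pos : 0 < ∑ w ∈ pathsFS L 0 P,
      Real.exp (-(1/ε) * levyProkhorovDist (pathMeasure ω 0 w) (n • ξ)) :=
    Finset.sum_pos (fun w _ => Real.exp_pos _) ⟨w0, hw0⟩
  have := Real.log_le_log (by positivity) hsum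
  rw [Real.log_mul hSp_pos.ne' (Real.exp_ne_zero _), Real.log_exp] at this
  linarith

/-- Perturbation estimate. -/
theorem Xn_perturbation {D : ℕ} (ε : ℝ) (hε : 0 < ε)
    (q : Fin D → ℝ) (ν ξ : Measure I) [IsFiniteMeasure ν] [IsFiniteMeasure ξ]
    (p : Fin D → ℝ) (hp : ∀ i, 0 ≤ p i) (hpq : ∀ i, p i ≤ q i)
    (ω : ((Fin D → ℤ) × Fin D) → I) (n : ℕ) :
    Xn ω ε n p ξ - (1/ε) * ((n : ℝ) * (∑ i, (q i - p i)) + (n : ℝ) * tvDist ν ξ + D)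
        ≤ Xn ω ε n p ξ -
          (1/ε) * ((∑ i, ((fl n q i : ℝ) - (fl n p i : ℝ)))
            + (n : ℝ) * levyProkhorovDist ν ξ) ∧
      Xn ω ε n p ξ -
          (1/ε) * ((∑ i, ((fl n q i : ℝ) - (fl n p i : ℝ)))
            + (n : ℝ) * levyProkhorovDist ν ξ)
        ≤ Xn ω ε n q ν := by
  have hP0 : ∀ i, 0 ≤ fl n p i :=
    fun i => Int.floor_nonneg.mpr (mul_nonneg (Nat.cast_nonneg n) (hp i))
  have hPQ : ∀ i, fl n p i ≤ fl n q i :=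
    fun i => Int.floor_le_floor (mul_le_mul_of_nonneg_left (hpq i) (Nat.cast_nonneg n))
  constructor
  · -- first inequality
    apply sub_le_sub_left
    apply mul_le_mul_of_nonneg_left _ (by positivity : (0:ℝ) ≤ 1/ε)
    have h1 : ∑ i, ((fl n q i : ℝ) - (fl n p i : ℝ))
        ≤ (n : ℝ) * (∑ i, (q i - p i)) + D := by
      have hb : ∀ i ∈ Finset.univ, ((fl n q i : ℝ) - (fl n p i : ℝ))
          ≤ ((n : ℝ) * (q i - p i) + 1) := by
        intro i _
        have h1 : (fl n q i : ℝ) ≤ (n : ℝ) * q i := Int.floor_le _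
        have h2 : (n : ℝ) * p i - 1 < (fl n p i : ℝ) := Int.sub_one_lt_floor _
        have h3 : (n : ℝ) * (q i - p i) = (n : ℝ) * q i - (n : ℝ) * p i := by ring
        linarith
      calc ∑ i, ((fl n q i : ℝ) - (fl n p i : ℝ))
          ≤ ∑ i, ((n : ℝ) * (q i - p i) + 1) := Finset.sum_le_sum hb
        _ = (n : ℝ) * (∑ i, (q i - p i)) + D := by
            rw [Finset.sum_add_distrib, Finset.mul_sum]
            simp [Finset.card_univ]
    have h2 : (n : ℝ) * levyProkhorovDist ν ξ ≤ (n : ℝ) * tvDist ν ξ :=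
      mul_le_mul_of_nonneg_left (levyProkhorovDist_le_tvDist ν ξ) (Nat.cast_nonneg n)
    linarith
  · -- second inequality
    obtain ⟨w0, hw0'⟩ := pathsFS_exists (∑ i, (fl n p i).toNat)
      (fun i => (fl n p i).toNat) (0 : Fin D → ℤ) rfl
    have hw0 : w0 ∈ pathsFS (∑ i, (fl n p i).toNat) 0 (fl n p) := by
      rw [mem_pathsFS] at hw0' ⊢
      intro i
      have h := hw0' i
      simp only [Pi.zero_apply] at h ⊢
      have := hP0 i
      omega
    obtain ⟨w', hw''⟩ := pathsFS_exists (∑ i, (fl n q i - fl n p i).toNat)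
      (fun i => (fl n q i - fl n p i).toNat) (fl n p) rfl
    have hw' : w' ∈ pathsFS (∑ i, (fl n q i - fl n p i).toNat) (fl n p) (fl n q) := by
      rw [mem_pathsFS] at hw'' ⊢
      intro i
      have h := hw'' i
      have := hPQ i
      omega
    have hLq : (∑ i, (fl n q i).toNat)
        = (∑ i, (fl n p i).toNat) + (∑ i, (fl n q i - fl n p i).toNat) := by
      rw [← Finset.sum_add_distrib]
      apply Finset.sum_congr rfl
      intro i _
      have := hP0 i
      have := hPQ i
      omega
    have hL' : (∑ i, ((fl n q i : ℝ) - (fl n p i : ℝ)))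
        = ((∑ i, (fl n q i - fl n p i).toNat : ℕ) : ℝ) := by
      rw [Nat.cast_sum]
      apply Finset.sum_congr rfl
      intro i _
      have h : ((fl n q i - fl n p i).toNat : ℤ) = fl n q i - fl n p i :=
        Int.toNat_of_nonneg (sub_nonneg.mpr (hPQ i))
      have h2 : (((fl n q i - fl n p i).toNat : ℤ) : ℝ) = ((fl n q i - fl n p i : ℤ) : ℝ) := by
        exact_mod_cast congrArg (fun z : ℤ => (z : ℝ)) h
      push_cast at h2 ⊢
      linarith
    have hmain := log_sum_le_log_sum ε hε ν ξ ω n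
      (∑ i, (fl n p i).toNat) (∑ i, (fl n q i - fl n p i).toNat)
      (fl n p) (fl n q) w0 hw0 w' hw'
    have hXq : Xn ω ε n q ν
        = Real.log (∑ v ∈ pathsFS ((∑ i, (fl n p i).toNat)
            + (∑ i, (fl n q i - fl n p i).toNat)) (0 : Fin D → ℤ) (fl n q),
          Real.exp (-(1/ε) * levyProkhorovDist (pathMeasure ω 0 v) (n • ν))) := by
      unfold Xn
      rw [hLq]
    rw [hXq, hL']
    unfold Xn
    exact hmain

end
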